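/- arXiv:1609.00750 — 2 statements merged into one kernel-verified Lean document; each statement's English description precedes it below -/
import Mathlib

section
/- Let $G \sim G(n, p)$ with $p = \frac{40 \log n}{n}$, fix a positive integer $t$ and $0 < \alpha < 1$, and let $L = \log n / \log\log n$. Then the probability that there exists a vertex subset $S$ with $|S| \le \alpha t L$ and at least $|S| + t$ edges inside $S$ is at most $\sum_{s \le \alpha t L} \binom{n}{s} \binom{\binom{s}{2}}{s+t} p^{s+t}$, and this quantity is $O(n^{-(1-\alpha-o(1))t})$, tending to $0$ as $n \to \infty$. -/
open MeasureTheory Filter Real Finset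

/-- `PMF.bernoulli` as in the older Mathlib: parameter `p : ℝ≥0∞` with `p ≤ 1`. -/
noncomputable def bernoulliENNReal (p : ENNReal) (h : p ≤ 1) : PMF Bool :=
  PMF.ofFintype (fun b => cond b p (1 - p)) (by simp [h])


lemma cyl_meas (n : ℕ) (p : ENNReal) (hp : p ≤ 1) (T : Finset (Sym2 (Fin n))) :
    (Measure.pi fun _ : Sym2 (Fin n) => (bernoulliENNReal p hp).toMeasure)
      {ω : Sym2 (Fin n) → Bool | ∀ e ∈ T, ω e = true} = p ^ T.card := by
  have hset : {ω : Sym2 (Fin n) → Bool | ∀ e ∈ T, ω e = true}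
      = Set.univ.pi (fun e => if e ∈ T then ({true} : Set Bool) else Set.univ) := by
    ext ω
    simp only [Set.mem_setOf_eq, Set.mem_pi, Set.mem_univ, forall_true_left]
    constructor
    · intro h e
      by_cases he : e ∈ T <;> simp [he, h e]
    · intro h e he
      have := h e
      simpa [he] using this
  rw [hset, Measure.pi_pi]
  have hfac : ∀ e : Sym2 (Fin n),
      (bernoulliENNReal p hp).toMeasure (if e ∈ T then ({true} : Set Bool) else Set.univ)
        = if e ∈ T then p else 1 := by
    intro e
    by_cases he : e ∈ T
    · simp only [he, if_true]
      rw [PMF.toMeasure_apply_singleton _ _ (measurableSet_singleton _)]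
      rfl
    · simp [he, bernoulliENNReal, add_tsub_cancel_of_le hp]
  simp_rw [hfac]
  rw [Finset.prod_ite_mem, Finset.univ_inter, Finset.prod_const]

lemma edge_card_le (n : ℕ) (S : Finset (Fin n)) :
    (Finset.univ.filter fun e : Sym2 (Fin n) => ¬ e.IsDiag ∧ ∀ x ∈ e, x ∈ S).card
      ≤ S.card.choose 2 := by
  classical
  have hsub : (Finset.univ.filter fun e : Sym2 (Fin n) => ¬ e.IsDiag ∧ ∀ x ∈ e, x ∈ S)
      ⊆ Finset.image (Sym2.map (Subtype.val : {x : Fin n // x ∈ S} → Fin n))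
          (Finset.univ.filter fun e : Sym2 {x : Fin n // x ∈ S} => ¬ e.IsDiag) := by
    intro e he
    simp only [Finset.mem_filter, Finset.mem_univ, true_and] at he
    obtain ⟨hd, hmem⟩ := he
    induction e with
    | _ x y =>
      have hx : x ∈ S := hmem x (Sym2.mem_mk_left x y)
      have hy : y ∈ S := hmem y (Sym2.mem_mk_right x y)
      simp only [Finset.mem_image, Finset.mem_filter, Finset.mem_univ, true_and]
      refine ⟨s(⟨x, hx⟩, ⟨y, hy⟩), ?_, rfl⟩
      simp only [Sym2.isDiag_iff_proj_eq] at hd ⊢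
      exact fun h => hd (congrArg Subtype.val h)
  calc (Finset.univ.filter fun e : Sym2 (Fin n) => ¬ e.IsDiag ∧ ∀ x ∈ e, x ∈ S).card
      ≤ (Finset.image (Sym2.map (Subtype.val : {x : Fin n // x ∈ S} → Fin n))
          (Finset.univ.filter fun e : Sym2 {x : Fin n // x ∈ S} => ¬ e.IsDiag)).card :=
        Finset.card_le_card hsub
    _ ≤ (Finset.univ.filter fun e : Sym2 {x : Fin n // x ∈ S} => ¬ e.IsDiag).card :=
        Finset.card_image_le
    _ = Fintype.card {e : Sym2 {x : Fin n // x ∈ S} // ¬ e.IsDiag} :=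
        (Fintype.card_subtype _).symm
    _ = (Fintype.card {x : Fin n // x ∈ S}).choose 2 := Sym2.card_subtype_not_diag
    _ = S.card.choose 2 := by rw [Fintype.card_coe]

lemma part1 (t : ℕ) (α : ℝ) (n : ℕ) (hn : 2 ≤ n)
    (hp : ENNReal.ofReal (40 * Real.log n / n) ≤ 1) :
    (Measure.pi fun _ : Sym2 (Fin n) => (bernoulliENNReal _ hp).toMeasure)
        {ω : Sym2 (Fin n) → Bool | ∃ S : Finset (Fin n),
          (S.card : ℝ) ≤ α * t * (Real.log n / Real.log (Real.log n)) ∧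
          S.card + t ≤
            (Finset.univ.filter fun e : Sym2 (Fin n) =>
              ¬ e.IsDiag ∧ (∀ x ∈ e, x ∈ S) ∧ ω e = true).card}
        ≤ ENNReal.ofReal (∑ s ∈ Finset.range (n + 1),
            if (s : ℝ) ≤ α * t * (Real.log n / Real.log (Real.log n)) then
              (n.choose s : ℝ) * ((s.choose 2).choose (s + t) : ℝ) *
                (40 * Real.log n / n) ^ (s + t)
            else 0) := by
  classical
  set q : ℝ := 40 * Real.log n / n with hq_def
  have hq0 : 0 ≤ q := by
    apply div_nonneg _ (Nat.cast_nonneg n)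
    have : (1 : ℝ) ≤ (n : ℝ) := by exact_mod_cast Nat.one_le_of_lt hn
    positivity
  set p : ENNReal := ENNReal.ofReal q with hp_def
  set M : ℝ := α * t * (Real.log n / Real.log (Real.log n)) with hM_def
  set μ := (Measure.pi fun _ : Sym2 (Fin n) => (bernoulliENNReal _ hp).toMeasure) with hμ_def
  set edg : Finset (Fin n) → Finset (Sym2 (Fin n)) :=
    fun S => Finset.univ.filter fun e : Sym2 (Fin n) => ¬ e.IsDiag ∧ ∀ x ∈ e, x ∈ S
    with hedg_def
  set Sfin : Finset (Finset (Fin n)) := Finset.univ.filter (fun S => (S.card : ℝ) ≤ M)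
    with hS_def
  -- step 1: inclusion into the union of cylinders
  have hsub : {ω : Sym2 (Fin n) → Bool | ∃ S : Finset (Fin n),
          (S.card : ℝ) ≤ M ∧
          S.card + t ≤
            (Finset.univ.filter fun e : Sym2 (Fin n) =>
              ¬ e.IsDiag ∧ (∀ x ∈ e, x ∈ S) ∧ ω e = true).card}
      ⊆ ⋃ S ∈ Sfin, ⋃ T ∈ (edg S).powersetCard (S.card + t),
          {ω : Sym2 (Fin n) → Bool | ∀ e ∈ T, ω e = true} := by
    rintro ω ⟨S, hcard, hcount⟩
    obtain ⟨T, hTsub, hTcard⟩ := Finset.exists_subset_card_eq hcount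
    simp only [Set.mem_iUnion]
    refine ⟨S, by simp [hS_def, hcard], T, ?_, ?_⟩
    · simp only [Finset.mem_powersetCard]
      constructor
      · intro e heT
        have := hTsub heT
        simp only [Finset.mem_filter, Finset.mem_univ, true_and] at this
        rw [hedg_def]
        simp only [Finset.mem_filter, Finset.mem_univ, true_and]
        exact ⟨this.1, this.2.1⟩
      · exact hTcard
    · intro e heT
      have := hTsub heT
      simp only [Finset.mem_filter] at this
      exact this.2.2.2
  refine le_trans (measure_mono hsub) ?_
  refine le_trans (measure_biUnion_finset_le _ _) ?_
  have hstep2 : ∀ S ∈ Sfin,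
      μ (⋃ T ∈ (edg S).powersetCard (S.card + t),
          {ω : Sym2 (Fin n) → Bool | ∀ e ∈ T, ω e = true})
        ≤ ((S.card.choose 2).choose (S.card + t) : ENNReal) * p ^ (S.card + t) := by
    intro S _
    refine le_trans (measure_biUnion_finset_le _ _) ?_
    have : ∀ T ∈ (edg S).powersetCard (S.card + t),
        μ {ω : Sym2 (Fin n) → Bool | ∀ e ∈ T, ω e = true} = p ^ (S.card + t) := by
      intro T hT
      rw [Finset.mem_powersetCard] at hT
      rw [hμ_def, cyl_meas, hT.2]
    rw [Finset.sum_congr rfl this, Finset.sum_const, Finset.card_powersetCard, nsmul_eq_mul]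
    have hle : (edg S).card.choose (S.card + t) ≤ (S.card.choose 2).choose (S.card + t) :=
      Nat.choose_le_choose _ (edge_card_le n S)
    exact mul_le_mul_left (by exact_mod_cast Nat.cast_le.mpr hle) _
  refine le_trans (Finset.sum_le_sum hstep2) ?_
  -- step 3: group by cardinality
  have hmaps : ∀ S ∈ Sfin, S.card ∈ Finset.range (n + 1) := by
    intro S _
    simp only [Finset.mem_range, Nat.lt_succ_iff]
    simpa using Finset.card_le_univ S
  rw [← Finset.sum_fiberwise_of_maps_to hmaps
    (fun S => ((Nat.choose (Nat.choose S.card 2) (S.card + t) : ℕ) : ENNReal) * p ^ (S.card + t))]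
  rw [ENNReal.ofReal_sum_of_nonneg]
  · refine Finset.sum_le_sum ?_
    intro j _
    have hfib : ∀ S ∈ Sfin.filter (fun S => S.card = j), S.card = j := by
      intro S hS
      exact (Finset.mem_filter.mp hS).2
    have hcongr : ∑ S ∈ Sfin.filter (fun S => S.card = j),
        ((Nat.choose (Nat.choose S.card 2) (S.card + t) : ℕ) : ENNReal) * p ^ (S.card + t)
        = (Sfin.filter (fun S => S.card = j)).card •
            (((Nat.choose (Nat.choose j 2) (j + t) : ℕ) : ENNReal) * p ^ (j + t)) := by
      rw [← Finset.sum_const]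
      refine Finset.sum_congr rfl ?_
      intro S hS
      rw [hfib S hS]
    rw [hcongr, nsmul_eq_mul]
    by_cases hj : (j : ℝ) ≤ M
    · have hfc : Sfin.filter (fun S => S.card = j) = Finset.univ.filter (fun S => S.card = j) := by
        ext S
        simp only [hS_def, Finset.mem_filter, Finset.mem_univ, true_and]
        constructor
        · rintro ⟨_, h2⟩; exact h2
        · intro h2; exact ⟨by rw [h2]; exact hj, h2⟩
      have hcard : (Sfin.filter (fun S => S.card = j)).card = n.choose j := by
        rw [hfc, ← Finset.powerset_univ, ← Finset.powersetCard_eq_filter,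
          Finset.card_powersetCard, Finset.card_univ, Fintype.card_fin]
      rw [hcard, if_pos hj, hp_def]
      rw [ENNReal.ofReal_mul (by positivity), ENNReal.ofReal_mul (by positivity),
        ENNReal.ofReal_pow hq0, ENNReal.ofReal_natCast, ENNReal.ofReal_natCast]
      exact le_of_eq (mul_assoc _ _ _).symm
    · have hfc : Sfin.filter (fun S => S.card = j) = ∅ := by
        ext S
        simp only [hS_def, Finset.mem_filter, Finset.mem_univ, true_and,
          Finset.notMem_empty, iff_false, not_and]
        intro h1 h2
        rw [h2] at h1
        exact hj h1
      rw [hfc, if_neg hj]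
      simp
  · intro j _
    by_cases hj : (j : ℝ) ≤ M
    · rw [if_pos hj]; positivity
    · rw [if_neg hj]


lemma chooseA (n s : ℕ) : (n.choose s : ℝ) * (s:ℝ)^s ≤ Real.exp s * (n:ℝ)^s := by
  have h1 : (s:ℝ)^s ≤ Real.exp s * (s.factorial : ℝ) := by
    have := Real.pow_div_factorial_le_exp (s : ℝ) (Nat.cast_nonneg s) s
    rw [div_le_iff₀ (by positivity)] at this
    simpa [Nat.cast_pow] using this
  have h2 : (n.choose s : ℝ) * (s.factorial : ℝ) ≤ (n:ℝ)^s := by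
    have := Nat.descFactorial_le_pow n s
    rw [Nat.descFactorial_eq_factorial_mul_choose] at this
    have := (Nat.cast_le (α := ℝ)).mpr this
    push_cast at this
    linarith
  calc (n.choose s : ℝ) * (s:ℝ)^s ≤ (n.choose s : ℝ) * (Real.exp s * s.factorial) :=
        mul_le_mul_of_nonneg_left h1 (Nat.cast_nonneg _)
    _ = Real.exp s * ((n.choose s : ℝ) * s.factorial) := by ring
    _ ≤ Real.exp s * (n:ℝ)^s := mul_le_mul_of_nonneg_left h2 (Real.exp_nonneg _)

lemma chooseB (s t : ℕ) : ((s.choose 2).choose (s+t) : ℝ) ≤ Real.exp s * (s:ℝ)^(s+t) := by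
  have hfac : (0:ℝ) < ((s+t).factorial : ℝ) := by positivity
  rw [← mul_le_mul_iff_of_pos_right hfac]
  have h1 : ((s.choose 2).choose (s+t) : ℝ) * ((s+t).factorial : ℝ) ≤ ((s:ℝ)^2)^(s+t) := by
    have h := Nat.descFactorial_le_pow (s.choose 2) (s+t)
    rw [Nat.descFactorial_eq_factorial_mul_choose] at h
    have h2 : (s.choose 2)^(s+t) ≤ (s^2)^(s+t) :=
      Nat.pow_le_pow_left (Nat.choose_le_pow _ _) _
    have := (Nat.cast_le (α := ℝ)).mpr (le_trans h h2)
    push_cast at this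
    linarith
  have h3 : (s:ℝ)^(s+t) ≤ Real.exp s * ((s+t).factorial : ℝ) := by
    have := Real.pow_div_factorial_le_exp (s : ℝ) (Nat.cast_nonneg s) (s+t)
    rw [div_le_iff₀ (by positivity)] at this
    simpa using this
  calc ((s.choose 2).choose (s+t) : ℝ) * ((s+t).factorial : ℝ) ≤ ((s:ℝ)^2)^(s+t) := h1
    _ = (s:ℝ)^(s+t) * (s:ℝ)^(s+t) := by rw [← pow_mul, ← pow_add]; ring_nf
    _ ≤ (Real.exp s * ((s+t).factorial : ℝ)) * (s:ℝ)^(s+t) :=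
        mul_le_mul_of_nonneg_right h3 (by positivity)
    _ = Real.exp s * (s:ℝ)^(s+t) * ((s+t).factorial : ℝ) := by ring

lemma termBound (n s t : ℕ) (q : ℝ) (hq : 0 ≤ q) :
    (n.choose s : ℝ) * ((s.choose 2).choose (s + t) : ℝ) * q ^ (s + t)
      ≤ Real.exp (2*s) * (s:ℝ)^t * (n:ℝ)^s * q ^ (s + t) := by
  refine mul_le_mul_of_nonneg_right ?_ (by positivity)
  have hss : (0:ℝ) < (s:ℝ)^s := by
    rcases Nat.eq_zero_or_pos s with rfl | hs
    · norm_num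
    · exact pow_pos (by exact_mod_cast hs) _
  rw [← mul_le_mul_iff_of_pos_right hss]
  calc (n.choose s : ℝ) * ((s.choose 2).choose (s+t) : ℝ) * (s:ℝ)^s
      = ((n.choose s : ℝ) * (s:ℝ)^s) * ((s.choose 2).choose (s+t) : ℝ) := by ring
    _ ≤ (Real.exp s * (n:ℝ)^s) * (Real.exp s * (s:ℝ)^(s+t)) := by
        refine mul_le_mul (chooseA n s) (chooseB s t) (Nat.cast_nonneg _) (by positivity)
    _ = Real.exp (2*s) * (s:ℝ)^t * (n:ℝ)^s * (s:ℝ)^s := by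
        rw [pow_add]
        rw [show (2:ℝ)*s = s + s by ring, Real.exp_add]
        ring

lemma sumBound (t : ℕ) (α : ℝ) (n : ℕ) (hn : 2 ≤ n)
    (hlog1 : 1 ≤ Real.log n)
    (hM0 : 0 ≤ α * t * (Real.log n / Real.log (Real.log n))) :
    (∑ s ∈ Finset.range (n + 1),
        if (s : ℝ) ≤ α * t * (Real.log n / Real.log (Real.log n)) then
          (n.choose s : ℝ) * ((s.choose 2).choose (s + t) : ℝ) *
            (40 * Real.log n / n) ^ (s + t)
        else 0)
      ≤ (α * t * (Real.log n / Real.log (Real.log n)) + 1) *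
        (Real.exp (2 * (α * t * (Real.log n / Real.log (Real.log n)))) *
          (α * t * (Real.log n / Real.log (Real.log n))) ^ t *
          (40 * Real.log n) ^ (α * t * (Real.log n / Real.log (Real.log n)) + t) /
          (n:ℝ) ^ t) := by
  set M : ℝ := α * t * (Real.log n / Real.log (Real.log n)) with hM_def
  have hn0 : (0:ℝ) < n := by positivity
  have h40 : 1 ≤ 40 * Real.log n := by linarith
  have hq0 : (0:ℝ) ≤ 40 * Real.log n / n := by positivity
  set B : ℝ := Real.exp (2 * M) * M ^ t * (40 * Real.log n) ^ (M + t) / (n:ℝ) ^ t with hB_def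
  have hB0 : 0 ≤ B := by
    apply div_nonneg _ (by positivity)
    apply mul_nonneg (mul_nonneg (Real.exp_nonneg _) (pow_nonneg hM0 _))
      (Real.rpow_nonneg (by linarith) _)
  have hterm : ∀ s : ℕ, (s:ℝ) ≤ M →
      (n.choose s : ℝ) * ((s.choose 2).choose (s + t) : ℝ) *
        (40 * Real.log n / n) ^ (s + t) ≤ B := by
    intro s hsM
    refine le_trans (termBound n s t _ hq0) ?_
    have hkey : (n:ℝ)^s * (40 * Real.log n / n) ^ (s + t)
        = (40 * Real.log n) ^ (s + t) / (n:ℝ) ^ t := by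
      rw [div_pow, pow_add (n:ℝ)]
      field_simp
    have hstep : Real.exp (2*s) * (s:ℝ)^t * (n:ℝ)^s * (40 * Real.log n / n) ^ (s + t)
        = Real.exp (2*s) * (s:ℝ)^t * ((40 * Real.log n) ^ (s + t) / (n:ℝ) ^ t) := by
      rw [mul_assoc, hkey]
    calc Real.exp (2*(s:ℝ)) * (s:ℝ)^t * (n:ℝ)^s * (40 * Real.log n / n) ^ (s + t)
        = Real.exp (2*(s:ℝ)) * (s:ℝ)^t *
            ((40 * Real.log n) ^ (((s + t : ℕ)):ℝ) / (n:ℝ)^t) := by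
          rw [Real.rpow_natCast, mul_assoc, hkey]
      _ ≤ Real.exp (2*M) * M^t * ((40 * Real.log n) ^ (M + t) / (n:ℝ)^t) := by
          gcongr
          · push_cast; linarith
      _ = B := by rw [hB_def]; ring
  have hstep1 : (∑ s ∈ Finset.range (n + 1),
      if (s : ℝ) ≤ M then
        (n.choose s : ℝ) * ((s.choose 2).choose (s + t) : ℝ) *
          (40 * Real.log n / n) ^ (s + t) else 0)
      ≤ ∑ s ∈ Finset.range (n + 1), if (s : ℝ) ≤ M then B else 0 := by
    refine Finset.sum_le_sum ?_
    intro s _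
    by_cases hs : (s:ℝ) ≤ M
    · rw [if_pos hs, if_pos hs]; exact hterm s hs
    · rw [if_neg hs, if_neg hs]
  refine le_trans hstep1 ?_
  rw [← Finset.sum_filter, Finset.sum_const, nsmul_eq_mul]
  refine mul_le_mul_of_nonneg_right ?_ hB0
  have hsubset : (Finset.range (n+1)).filter (fun s : ℕ => (s:ℝ) ≤ M)
      ⊆ Finset.range (⌊M⌋₊ + 1) := by
    intro s hs
    simp only [Finset.mem_filter] at hs
    rw [Finset.mem_range, Nat.lt_succ_iff]
    exact Nat.le_floor hs.2
  calc (((Finset.range (n+1)).filter (fun s : ℕ => (s:ℝ) ≤ M)).card : ℝ)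
      ≤ ((Finset.range (⌊M⌋₊ + 1)).card : ℝ) := by
        exact_mod_cast Finset.card_le_card hsubset
    _ = (⌊M⌋₊ : ℝ) + 1 := by rw [Finset.card_range]; push_cast; ring
    _ ≤ M + 1 := by linarith [Nat.floor_le hM0]

lemma gTendsto (t : ℕ) (ht : 1 ≤ t) (α : ℝ) (hα0 : 0 < α) (hα1 : α < 1) :
    Tendsto (fun n : ℕ =>
      (α * t * (Real.log n / Real.log (Real.log n)) + 1) *
        (Real.exp (2 * (α * t * (Real.log n / Real.log (Real.log n)))) *
          (α * t * (Real.log n / Real.log (Real.log n))) ^ t *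
          (40 * Real.log n) ^ (α * t * (Real.log n / Real.log (Real.log n)) + t) /
          (n:ℝ) ^ t)) atTop (nhds 0) := by
  have htR : (1:ℝ) ≤ t := by exact_mod_cast ht
  have hαt : 0 < α * t := by positivity
  have hl40 : 0 ≤ Real.log 40 := Real.log_nonneg (by norm_num)
  set M : ℕ → ℝ := fun n => α * t * (Real.log n / Real.log (Real.log n)) with hM_def
  have hlog : Tendsto (fun n : ℕ => Real.log n) atTop atTop :=
    Real.tendsto_log_atTop.comp tendsto_natCast_atTop_atTop
  have hllog : Tendsto (fun n : ℕ => Real.log (Real.log n)) atTop atTop :=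
    Real.tendsto_log_atTop.comp hlog
  have hlql : Tendsto (fun n : ℕ => Real.log (Real.log n) / Real.log n) atTop (nhds 0) := by
    have h := (Real.tendsto_pow_log_div_mul_add_atTop 1 0 1 one_ne_zero).comp hlog
    refine h.congr ?_
    intro n
    simp [Function.comp]
  have hL : Tendsto (fun n : ℕ => Real.log n / Real.log (Real.log n)) atTop atTop := by
    have hpos : ∀ᶠ n : ℕ in atTop, Real.log (Real.log n) / Real.log n ∈ Set.Ioi (0:ℝ) := by
      filter_upwards [hlog.eventually_gt_atTop 0, hllog.eventually_gt_atTop 0] with n h1 h2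
      exact div_pos h2 h1
    have h := (tendsto_nhdsWithin_of_tendsto_nhds_of_eventually_within _ hlql hpos).inv_tendsto_nhdsGT_zero
    refine h.congr ?_
    intro n
    simp [Pi.inv_apply, inv_div]
  have hMtop : Tendsto M atTop atTop := hL.const_mul_atTop hαt
  have hconst_div_log : ∀ c : ℝ, Tendsto (fun n : ℕ => c / Real.log n) atTop (nhds 0) := by
    intro c
    have h := hlog.inv_tendsto_atTop.const_mul c
    simpa [div_eq_mul_inv] using h
  have hconst_div_llog : ∀ c : ℝ, Tendsto (fun n : ℕ => c / Real.log (Real.log n)) atTop (nhds 0) := by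
    intro c
    have h := hllog.inv_tendsto_atTop.const_mul c
    simpa [div_eq_mul_inv] using h
  have hMdivlog : Tendsto (fun n : ℕ => M n / Real.log n) atTop (nhds 0) := by
    refine (hconst_div_llog (α * t)).congr' ?_
    filter_upwards [hlog.eventually_gt_atTop 0, hllog.eventually_gt_atTop 0] with n h1 h2
    rw [hM_def]
    field_simp
  -- the quotient function
  set φ : ℕ → ℝ := fun n =>
      (1+(t:ℝ))*((Real.log (α*t+1) + Real.log (Real.log n)) / Real.log n)
      + (2 + Real.log 40)*(M n / Real.log n)
      + ((t:ℝ)*Real.log 40)/Real.log n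
      + (t:ℝ)*(Real.log (Real.log n)/Real.log n) with hφ_def
  have hφ : Tendsto φ atTop (nhds 0) := by
    have hA : Tendsto (fun n : ℕ =>
        (Real.log (α*t+1) + Real.log (Real.log n)) / Real.log n) atTop (nhds 0) := by
      have h := (hconst_div_log (Real.log (α*t+1))).add hlql
      simp only [add_zero] at h
      refine h.congr ?_
      intro n
      rw [add_div]
    have h := (((hA.const_mul (1+(t:ℝ))).add (hMdivlog.const_mul (2 + Real.log 40))).add
      (hconst_div_log ((t:ℝ)*Real.log 40))).add (hlql.const_mul (t:ℝ))
    simpa using h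
  have hc' : (0:ℝ) < (1-α)*t/2 := by
    have : (0:ℝ) < (1-α) := by linarith
    positivity
  set c' : ℝ := (1-α)*t/2 with hc'_def
  -- h function
  set ψ : ℕ → ℝ := fun n => Real.log (M n + 1) + 2*M n + (t:ℝ)*Real.log (M n)
      + (M n + t)*Real.log (40*Real.log n) - (t:ℝ)*Real.log n with hψ_def
  have hψ_bot : Tendsto ψ atTop atBot := by
    refine tendsto_atBot_mono' atTop ?_ (hlog.const_mul_atTop_of_neg (by linarith : -c' < 0))
    filter_upwards [hMtop.eventually_ge_atTop 1, hlog.eventually_gt_atTop 1,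
      hllog.eventually_ge_atTop 1, hφ.eventually_lt_const hc'] with n hM1 hlog1 hllog1 hφn
    have hlogpos : (0:ℝ) < Real.log n := by linarith
    have hllogpos : (0:ℝ) < Real.log (Real.log n) := by linarith
    have hMpos : (0:ℝ) < M n := by linarith
    have hMlog : M n * Real.log (Real.log n) = α*t*Real.log n := by
      rw [hM_def]
      field_simp
    have hexpand : ψ n = Real.log (M n+1) + 2*M n + (t:ℝ)*Real.log (M n)
        + M n*Real.log 40 + α*t*Real.log n + (t:ℝ)*Real.log 40
        + (t:ℝ)*Real.log (Real.log n) - (t:ℝ)*Real.log n := by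
      rw [hψ_def]
      simp only
      rw [Real.log_mul (by norm_num) (by linarith : Real.log n ≠ 0)]
      linear_combination hMlog
    have hlogM1 : Real.log (M n + 1) ≤ Real.log (α*t+1) + Real.log (Real.log n) := by
      have hMle : M n ≤ α*t*Real.log n := by
        rw [hM_def]
        simp only
        refine mul_le_mul_of_nonneg_left ?_ (le_of_lt hαt)
        exact div_le_self (by linarith) hllog1
      have h1 : M n + 1 ≤ (α*t+1)*Real.log n := by nlinarith
      calc Real.log (M n + 1) ≤ Real.log ((α*t+1)*Real.log n) :=
            Real.log_le_log (by linarith) h1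
        _ = Real.log (α*t+1) + Real.log (Real.log n) :=
            Real.log_mul (by positivity) (by linarith)
    have hlogM : Real.log (M n) ≤ Real.log (α*t+1) + Real.log (Real.log n) := by
      refine le_trans (Real.log_le_log hMpos (by linarith)) hlogM1
    have ht0 : (0:ℝ) ≤ (t:ℝ) := by linarith
    have hφmul : φ n * Real.log n = (1+(t:ℝ))*(Real.log (α*t+1) + Real.log (Real.log n))
        + (2 + Real.log 40)*M n + (t:ℝ)*Real.log 40
        + (t:ℝ)*Real.log (Real.log n) := by
      rw [hφ_def]
      field_simp
    have hφle : φ n * Real.log n ≤ c' * Real.log n :=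
      mul_le_mul_of_nonneg_right (le_of_lt hφn) (le_of_lt hlogpos)
    have htlogM : (t:ℝ)*Real.log (M n) ≤ (t:ℝ)*(Real.log (α*t+1) + Real.log (Real.log n)) :=
      mul_le_mul_of_nonneg_left hlogM ht0
    have hαc : α*t - t = -2*c' := by rw [hc'_def]; ring
    rw [hexpand]
    nlinarith [hφmul, hφle]
  -- now rewrite g as exp ∘ ψ
  have hev : ∀ᶠ n : ℕ in atTop, Real.exp (ψ n) =
      (M n + 1) * (Real.exp (2 * M n) * (M n) ^ t *
        (40 * Real.log n) ^ (M n + t) / (n:ℝ) ^ t) := by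
    filter_upwards [hMtop.eventually_ge_atTop 1, hlog.eventually_gt_atTop 1,
      eventually_gt_atTop 0] with n hM1 hlog1 hn0
    have hMpos : (0:ℝ) < M n := by linarith
    have hnpos : (0:ℝ) < (n:ℝ) := by exact_mod_cast hn0
    have h40pos : (0:ℝ) < 40*Real.log n := by linarith
    rw [hψ_def]
    simp only
    rw [sub_eq_add_neg, Real.exp_add, Real.exp_add, Real.exp_add, Real.exp_add]
    rw [Real.exp_log (by linarith : (0:ℝ) < M n + 1)]
    rw [show ((t:ℝ)*Real.log (M n)) = ((t:ℕ):ℝ)*Real.log (M n) by norm_num,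
      Real.exp_nat_mul, Real.exp_log hMpos]
    rw [show ((M n + t)*Real.log (40*Real.log n)) = Real.log (40*Real.log n)*(M n + t) by ring,
      ← Real.rpow_def_of_pos h40pos]
    rw [show (-((t:ℝ)*Real.log n)) = -(((t:ℕ):ℝ)*Real.log n) by norm_num,
      Real.exp_neg, Real.exp_nat_mul, Real.exp_log hnpos]
    rw [div_eq_mul_inv]
    ring
  exact ((Real.tendsto_exp_atBot.comp hψ_bot).congr' hev)

/-- In `G(n, 40 log n / n)` (product of Bernoulli measures over edge slots), for fixed
`t ≥ 1` and `0 < α < 1`, the probability that some set `S` with `|S| ≤ α t L`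
(`L = log n / log log n`) spans at least `|S| + t` edges is bounded by the union-bound
sum `∑_{s ≤ αtL} C(n,s) C(C(s,2), s+t) p^{s+t}`, and this bound tends to `0`. -/
theorem dense_small_sets_unlikely (t : ℕ) (ht : 1 ≤ t) (α : ℝ) (hα0 : 0 < α) (hα1 : α < 1) :
    (∀ n : ℕ, 2 ≤ n →
      ∀ hp : ENNReal.ofReal (40 * Real.log n / n) ≤ 1,
      (Measure.pi fun _ : Sym2 (Fin n) => (bernoulliENNReal _ hp).toMeasure)
        {ω : Sym2 (Fin n) → Bool | ∃ S : Finset (Fin n),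
          (S.card : ℝ) ≤ α * t * (Real.log n / Real.log (Real.log n)) ∧
          S.card + t ≤
            (Finset.univ.filter fun e : Sym2 (Fin n) =>
              ¬ e.IsDiag ∧ (∀ x ∈ e, x ∈ S) ∧ ω e = true).card}
        ≤ ENNReal.ofReal (∑ s ∈ Finset.range (n + 1),
            if (s : ℝ) ≤ α * t * (Real.log n / Real.log (Real.log n)) then
              (n.choose s : ℝ) * ((s.choose 2).choose (s + t) : ℝ) *
                (40 * Real.log n / n) ^ (s + t)
            else 0)) ∧
    Tendsto (fun n : ℕ => ∑ s ∈ Finset.range (n + 1),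
        if (s : ℝ) ≤ α * t * (Real.log n / Real.log (Real.log n)) then
          (n.choose s : ℝ) * ((s.choose 2).choose (s + t) : ℝ) *
            (40 * Real.log n / n) ^ (s + t)
        else 0)
      atTop (nhds 0) := by
  constructor
  · intro n hn hp
    exact part1 t α n hn hp
  · have hlog : Tendsto (fun n : ℕ => Real.log n) atTop atTop :=
      Real.tendsto_log_atTop.comp tendsto_natCast_atTop_atTop
    have hllog : Tendsto (fun n : ℕ => Real.log (Real.log n)) atTop atTop :=
      Real.tendsto_log_atTop.comp hlog
    refine squeeze_zero' ?_ ?_ (gTendsto t ht α hα0 hα1)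
    · filter_upwards with n
      refine Finset.sum_nonneg ?_
      intro s _
      by_cases hs : (s : ℝ) ≤ α * t * (Real.log n / Real.log (Real.log n))
      · rw [if_pos hs]
        have h0 : (0:ℝ) ≤ 40 * Real.log n / n := by
          apply div_nonneg _ (Nat.cast_nonneg n)
          have := Real.log_natCast_nonneg n
          linarith
        positivity
      · rw [if_neg hs]
    · filter_upwards [eventually_ge_atTop 2, hlog.eventually_ge_atTop 1,
        hllog.eventually_ge_atTop 0] with n hn hlog1 hllog0
      refine sumBound t α n hn hlog1 ?_
      have h1 : 0 ≤ Real.log n / Real.log (Real.log n) := div_nonneg (by linarith) hllog0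
      positivity
end

section
/- For the lazy random walk on $\mathbb{Z}/k\mathbb{Z}$ with $k \ge 3$, $0 < q \le 1/2$, the gap between the return probability and the transition probability to state 1 satisfies $p_{00}^t - p_{01}^t \ge \frac{1}{k}(1 - \cos(2\pi/k)) \cdot (1 - q + q\cos(2\pi/k))^t > 0$ for all $t \ge 1$. In particular, for fixed $k$ and $q$ the gap decays at most exponentially in $t$ with base $1 - q + q\cos(2\pi/k) < 1$, and for $t = O(\log n/\log\log n)$ the gap is at least $n^{-o(1)}$. -/
open Finset Real

private lemma root_pow_mod {η : ℂ} {k : ℕ} (hη : η ^ k = 1) (n : ℕ) :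
    η ^ (n % k) = η ^ n := by
  conv_rhs => rw [← Nat.mod_add_div n k]
  rw [pow_add, pow_mul, hη, one_pow, mul_one]

/-- Spectral identity for the lazy walk gap. -/
private lemma lazy_walk_spectral (k : ℕ) [NeZero k] (hk : 3 ≤ k) (q : ℝ) (t : ℕ)
    (M : Matrix (ZMod k) (ZMod k) ℝ) (hM : M = Matrix.of fun i j =>
      (if j = i then 1 - q else 0) + (if j = i + 1 then q / 2 else 0) +
        (if j = i - 1 then q / 2 else 0)) :
    (M ^ t) 0 0 - (M ^ t) 0 1 =
      (1 / (k : ℝ)) * ∑ m ∈ Finset.range k,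
        (1 - Real.cos (2 * Real.pi * m / k)) *
          (1 - q + q * Real.cos (2 * Real.pi * m / k)) ^ t := by
  have hk0 : (k : ℝ) ≠ 0 := Nat.cast_ne_zero.mpr (NeZero.ne k)
  have hk1 : 1 < k := by omega
  haveI : Fact (1 < k) := ⟨hk1⟩
  -- complex version of M
  set Mc : Matrix (ZMod k) (ZMod k) ℂ := Matrix.of fun i j =>
    (if j = i then 1 - (q : ℂ) else 0) + (if j = i + 1 then (q : ℂ) / 2 else 0) +
      (if j = i - 1 then (q : ℂ) / 2 else 0) with hMc
  have hmap : Mc = Complex.ofRealHom.mapMatrix M := by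
    ext i j
    simp [hMc, hM, RingHom.mapMatrix_apply, Matrix.map_apply, apply_ite Complex.ofReal]
  have hpow : ∀ s : ℕ, Mc ^ s = Complex.ofRealHom.mapMatrix (M ^ s) := by
    intro s; rw [hmap, map_pow]
  -- the root of unity
  set ζ : ℂ := Complex.exp (2 * Real.pi * Complex.I / k) with hζdef
  have hζ : IsPrimitiveRoot ζ k := by
    have := Complex.isPrimitiveRoot_exp k (NeZero.ne k)
    exact this
  have hζk : ζ ^ k = 1 := hζ.pow_eq_one
  have hζ0 : ζ ≠ 0 := fun h => by simp [h, zero_pow (NeZero.ne k)] at hζk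
  -- eigenvector computations
  have hval1 : (1 : ZMod k).val = 1 := ZMod.val_one k
  have key : ∀ m : ℕ, ((Mc ^ t).mulVec fun j : ZMod k => (ζ ^ m) ^ j.val) =
      ((1 - (q:ℂ)) + (q:ℂ)/2 * ζ ^ m + (q:ℂ)/2 * (ζ ^ m)⁻¹) ^ t •
        fun j : ZMod k => (ζ ^ m) ^ j.val := by
    intro m
    set η : ℂ := ζ ^ m with hηdef
    have hηk : η ^ k = 1 := by rw [hηdef, ← pow_mul, mul_comm, pow_mul, hζk, one_pow]
    have hη0 : η ≠ 0 := pow_ne_zero _ hζ0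
    have hup : ∀ a : ZMod k, η ^ (a + 1).val = η * η ^ a.val := by
      intro a
      rw [ZMod.val_add, hval1, root_pow_mod hηk, pow_succ, mul_comm]
    have hdown : ∀ a : ZMod k, η ^ (a - 1).val = η⁻¹ * η ^ a.val := by
      intro a
      have := hup (a - 1)
      rw [sub_add_cancel] at this
      field_simp [this]
      rw [this]; ring
    have heig : Mc.mulVec (fun j : ZMod k => η ^ j.val) =
        ((1 - (q:ℂ)) + (q:ℂ)/2 * η + (q:ℂ)/2 * η⁻¹) • fun j : ZMod k => η ^ j.val := by
      funext i
      simp only [Matrix.mulVec, dotProduct, hMc, Matrix.of_apply, add_mul, ite_mul,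
        zero_mul, Finset.sum_add_distrib, Finset.sum_ite_eq', Finset.mem_univ, if_true,
        Pi.smul_apply, smul_eq_mul]
      rw [hup i, hdown i]
      ring
    induction t with
    | zero => simp [Matrix.one_mulVec]
    | succ s ih =>
      rw [pow_succ', ← Matrix.mulVec_mulVec, ih, Matrix.mulVec_smul, heig, smul_smul,
        ← pow_succ]
  -- inner geometric sums
  have geo : ∀ z : ℂ, z ^ k = 1 → ∑ m ∈ Finset.range k, z ^ m =
      if z = 1 then (k : ℂ) else 0 := by
    intro z hz
    by_cases h1 : z = 1
    · simp [h1]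
    · rw [if_neg h1, geom_sum_eq h1, hz, sub_self, zero_div]
  -- the delta decomposition at each j
  have hdelta : ∀ j : ZMod k,
      ∑ m ∈ Finset.range k, (1 - (ζ ^ m)⁻¹) * (ζ ^ m) ^ j.val =
        (if j = 0 then (k : ℂ) else 0) - (if j = 1 then (k : ℂ) else 0) := by
    intro j
    have hterm : ∀ m : ℕ, (1 - (ζ ^ m)⁻¹) * (ζ ^ m) ^ j.val =
        (ζ ^ j.val) ^ m - (ζ ^ j.val * ζ⁻¹) ^ m := by
      intro m
      have h1 : (ζ ^ m) ^ j.val = (ζ ^ j.val) ^ m := pow_right_comm ζ m j.val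
      have h2 : (ζ⁻¹ : ℂ) ^ m = (ζ ^ m)⁻¹ := inv_pow ζ m
      rw [mul_pow, h2, ← h1]
      ring
    rw [Finset.sum_congr rfl fun m _ => hterm m, Finset.sum_sub_distrib,
      geo _ (by rw [pow_right_comm, hζk, one_pow]),
      geo _ (by rw [mul_pow, pow_right_comm, hζk, one_pow, inv_pow, hζk, inv_one, mul_one])]
    have e1 : (ζ ^ j.val = 1) ↔ j = 0 := by
      rw [hζ.pow_eq_one_iff_dvd]
      constructor
      · intro h
        have hlt := ZMod.val_lt j
        have hj0 : j.val = 0 := by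
          rcases Nat.eq_zero_or_pos j.val with h' | h'
          · exact h'
          · exact absurd (Nat.le_of_dvd h' h) (by omega)
        exact (ZMod.val_eq_zero j).mp hj0
      · intro h; rw [h, ZMod.val_zero]; exact dvd_zero k
    have e2 : (ζ ^ j.val * ζ⁻¹ = 1) ↔ j = 1 := by
      rw [mul_inv_eq_one₀ hζ0]
      constructor
      · intro h
        have h1 : ζ ^ j.val = ζ ^ 1 := by rw [pow_one]; exact h
        have hv := hζ.pow_inj (ZMod.val_lt j) hk1 h1
        have hj : j = ((1 : ℕ) : ZMod k) := by rw [← ZMod.natCast_rightInverse j, hv]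
        simpa using hj
      · intro h; rw [h, hval1, pow_one]
    simp only [e1, e2]
  -- main complex identity
  have hzero : ∀ m : ℕ, ((ζ ^ m) ^ (0 : ZMod k).val : ℂ) = 1 := by
    intro m; rw [ZMod.val_zero, pow_zero]
  have hmain : (Mc ^ t) 0 0 - (Mc ^ t) 0 1 =
      (1 / (k : ℂ)) * ∑ m ∈ Finset.range k,
        (1 - (ζ ^ m)⁻¹) * ((1 - (q:ℂ)) + (q:ℂ)/2 * ζ ^ m + (q:ℂ)/2 * (ζ ^ m)⁻¹) ^ t := by
    have hS : ∑ m ∈ Finset.range k,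
        (1 - (ζ ^ m)⁻¹) * ((1 - (q:ℂ)) + (q:ℂ)/2 * ζ ^ m + (q:ℂ)/2 * (ζ ^ m)⁻¹) ^ t =
        (k : ℂ) * ((Mc ^ t) 0 0 - (Mc ^ t) 0 1) := by
      have hterm : ∀ m ∈ Finset.range k,
          (1 - (ζ ^ m)⁻¹) * ((1 - (q:ℂ)) + (q:ℂ)/2 * ζ ^ m + (q:ℂ)/2 * (ζ ^ m)⁻¹) ^ t =
          ∑ j : ZMod k, (Mc ^ t) 0 j * ((1 - (ζ ^ m)⁻¹) * (ζ ^ m) ^ j.val) := by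
        intro m _
        have := congrFun (key m) 0
        simp only [Pi.smul_apply, smul_eq_mul, hzero m, mul_one] at this
        rw [← this]
        simp only [Matrix.mulVec, dotProduct]
        rw [Finset.mul_sum]
        congr 1; funext j; ring
      rw [Finset.sum_congr rfl hterm, Finset.sum_comm]
      have : ∀ j : ZMod k, ∑ m ∈ Finset.range k,
          (Mc ^ t) 0 j * ((1 - (ζ ^ m)⁻¹) * (ζ ^ m) ^ j.val) =
          (Mc ^ t) 0 j * ((if j = 0 then (k : ℂ) else 0) - (if j = 1 then (k : ℂ) else 0)) := by
        intro j; rw [← Finset.mul_sum, hdelta j]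
      rw [Finset.sum_congr rfl fun j _ => this j]
      simp only [mul_sub, mul_ite, mul_zero, Finset.sum_sub_distrib, Finset.sum_ite_eq',
        Finset.mem_univ, if_true]
      ring
    rw [hS]
    have hkC : (k : ℂ) ≠ 0 := Nat.cast_ne_zero.mpr (NeZero.ne k)
    field_simp
  -- take real parts
  have hre : ∀ m : ℕ,
      ((1 - (ζ ^ m)⁻¹) * ((1 - (q:ℂ)) + (q:ℂ)/2 * ζ ^ m + (q:ℂ)/2 * (ζ ^ m)⁻¹) ^ t) =
      Complex.ofReal ((1 - q + q * Real.cos (2 * Real.pi * m / k)) ^ t) -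
        (ζ ^ m)⁻¹ * Complex.ofReal ((1 - q + q * Real.cos (2 * Real.pi * m / k)) ^ t) := by
    intro m
    have hζm : ζ ^ m = Complex.exp (((2 * Real.pi * m / k : ℝ) : ℂ) * Complex.I) := by
      rw [hζdef, ← Complex.exp_nat_mul]
      congr 1
      push_cast; ring
    have hζminv : (ζ ^ m)⁻¹ = Complex.exp (((-(2 * Real.pi * m / k) : ℝ) : ℂ) * Complex.I) := by
      rw [hζm, ← Complex.exp_neg]
      congr 1; push_cast; ring
    have hlam : (1 - (q:ℂ)) + (q:ℂ)/2 * ζ ^ m + (q:ℂ)/2 * (ζ ^ m)⁻¹ =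
        Complex.ofReal (1 - q + q * Real.cos (2 * Real.pi * m / k)) := by
      rw [hζminv, hζm, Complex.exp_mul_I, Complex.exp_mul_I]
      rw [Complex.ofReal_neg, Complex.cos_neg, Complex.sin_neg]
      rw [← Complex.ofReal_cos]
      push_cast
      ring
    rw [hlam, ← Complex.ofReal_pow]
    ring
  -- conclude
  have hfinal := hmain
  rw [Finset.sum_congr rfl fun m _ => hre m, hpow t] at hfinal
  have hlhs : ((M ^ t) 0 0 - (M ^ t) 0 1 : ℝ) =
      ((Complex.ofRealHom.mapMatrix (M ^ t) : Matrix (ZMod k) (ZMod k) ℂ) 0 0 -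
        Complex.ofRealHom.mapMatrix (M ^ t) 0 1).re := by
    simp [RingHom.mapMatrix_apply, Matrix.map_apply]
  rw [hlhs, hfinal]
  have hinvre : ∀ m : ℕ, ((ζ ^ m)⁻¹).re = Real.cos (2 * Real.pi * m / k) := by
    intro m
    have hζm : ζ ^ m = Complex.exp (((2 * Real.pi * m / k : ℝ) : ℂ) * Complex.I) := by
      rw [hζdef, ← Complex.exp_nat_mul]; congr 1; push_cast; ring
    rw [hζm, ← Complex.exp_neg]
    have heq : -(((2 * Real.pi * m / k : ℝ) : ℂ) * Complex.I) =
        ((-(2 * Real.pi * m / k) : ℝ) : ℂ) * Complex.I := by push_cast; ring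
    rw [heq, Complex.exp_ofReal_mul_I_re, Real.cos_neg]
  have h1k : (1 / (k:ℂ)) = Complex.ofReal (1 / (k:ℝ)) := by push_cast; ring
  rw [h1k, Complex.mul_re]
  simp only [Complex.ofReal_re, Complex.ofReal_im, zero_mul, sub_zero]
  congr 1
  rw [Complex.re_sum]
  refine Finset.sum_congr rfl fun m _ => ?_
  simp only [Complex.sub_re, Complex.mul_re, Complex.ofReal_re, Complex.ofReal_im, mul_zero,
    sub_zero, hinvre m]
  ring

/-- For the lazy random walk on `ℤ/kℤ` with `k ≥ 3` and `0 < q ≤ 1/2`, for all `t ≥ 1`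
the gap between the return probability and the transition probability to state `1`
satisfies `p₀₀ᵗ - p₀₁ᵗ ≥ (1/k)(1 - cos(2π/k))(1 - q + q cos(2π/k))^t > 0`, and the decay
base satisfies `1 - q + q cos(2π/k) < 1`. -/
theorem lazy_walk_gap (k : ℕ) [NeZero k] (hk : 3 ≤ k)
    (q : ℝ) (hq0 : 0 < q) (hq : q ≤ 1 / 2) :
    let M : Matrix (ZMod k) (ZMod k) ℝ := Matrix.of fun i j =>
      (if j = i then 1 - q else 0) + (if j = i + 1 then q / 2 else 0) +
        (if j = i - 1 then q / 2 else 0)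
    (∀ t : ℕ, 1 ≤ t →
      (1 / (k : ℝ)) * (1 - Real.cos (2 * Real.pi / k)) *
          (1 - q + q * Real.cos (2 * Real.pi / k)) ^ t
        ≤ (M ^ t) 0 0 - (M ^ t) 0 1 ∧
      0 < (1 / (k : ℝ)) * (1 - Real.cos (2 * Real.pi / k)) *
          (1 - q + q * Real.cos (2 * Real.pi / k)) ^ t) ∧
    1 - q + q * Real.cos (2 * Real.pi / k) < 1 := by
  intro M
  have hπ := Real.pi_pos
  have hk3 : (3 : ℝ) ≤ k := by exact_mod_cast hk
  have hkpos : (0 : ℝ) < k := by linarith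
  have hklarge : 2 * Real.pi / k ≤ 2 * Real.pi / 3 :=
    div_le_div_of_nonneg_left (by linarith) (by norm_num) hk3
  have h2π3 : 2 * Real.pi / 3 ≤ Real.pi := by linarith
  have hposx : 0 < 2 * Real.pi / k := by positivity
  have hcos_lt : Real.cos (2 * Real.pi / k) < 1 := by
    have h := Real.cos_lt_cos_of_nonneg_of_le_pi (le_refl (0:ℝ)) (by linarith) hposx
    rwa [Real.cos_zero] at h
  have hcos_ge : -(1/2 : ℝ) ≤ Real.cos (2 * Real.pi / k) := by
    have h := Real.cos_le_cos_of_nonneg_of_le_pi (le_of_lt hposx) h2π3 hklarge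
    have h23 : Real.cos (2 * Real.pi / 3) = -(1/2) := by
      have e : (2 * Real.pi / 3 : ℝ) = Real.pi - Real.pi / 3 := by ring
      rw [e, Real.cos_pi_sub, Real.cos_pi_div_three]
    linarith
  have hlam_pos : 0 < 1 - q + q * Real.cos (2 * Real.pi / k) := by nlinarith
  have hlam_lt : 1 - q + q * Real.cos (2 * Real.pi / k) < 1 := by nlinarith
  refine ⟨fun t _ => ⟨?_, ?_⟩, hlam_lt⟩
  · rw [lazy_walk_spectral k hk q t M rfl]
    have h1k : (0:ℝ) < 1 / (k:ℝ) := by positivity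
    have hterm : ∀ m ∈ Finset.range k,
        (0:ℝ) ≤ (1 - Real.cos (2 * Real.pi * m / k)) *
          (1 - q + q * Real.cos (2 * Real.pi * m / k)) ^ t := by
      intro m _
      have h1 := Real.cos_le_one (2 * Real.pi * m / k)
      have h2 := Real.neg_one_le_cos (2 * Real.pi * m / k)
      apply mul_nonneg (by linarith)
      apply pow_nonneg
      nlinarith
    have h1mem : (1:ℕ) ∈ Finset.range k := Finset.mem_range.mpr (by omega)
    have hsingle := Finset.single_le_sum hterm h1mem
    have hcast : (2 * Real.pi * ((1:ℕ):ℝ) / k) = 2 * Real.pi / k := by norm_num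
    rw [hcast] at hsingle
    rw [mul_assoc]
    exact mul_le_mul_of_nonneg_left hsingle (le_of_lt h1k)
  · have : (0:ℝ) < 1 - Real.cos (2 * Real.pi / k) := by linarith
    positivity
end
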